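/- Let c(x) = W₂ * tanh(W₁ x + b₁) + b₂ with c'(x) ≠ 0 at some point x. If c''(x)/c'(x) = 1/ε for some ε > 0, then 2|W₁| > 1/ε. -/

import Mathlib

lemma my_abs_tanh_lt_one (t : ℝ) : |Real.tanh t| < 1 := by
  have hc := Real.cosh_pos t
  have h : Real.sinh t ^ 2 < Real.cosh t ^ 2 := by
    have := Real.cosh_sq_sub_sinh_sq t; nlinarith
  have habs : |Real.sinh t| < Real.cosh t := by
    exact abs_lt_of_sq_lt_sq h (le_of_lt hc)
  rw [Real.tanh_eq_sinh_div_cosh, abs_div, abs_of_pos hc, div_lt_one hc]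
  exact habs

lemma my_hasDerivAt_tanh (t : ℝ) :
    HasDerivAt Real.tanh (1 - Real.tanh t ^ 2) t := by
  have h := (Real.hasDerivAt_sinh t).div (Real.hasDerivAt_cosh t) (Real.cosh_pos t).ne'
  have heq : (Real.cosh t * Real.cosh t - Real.sinh t * Real.sinh t) / Real.cosh t ^ 2
      = 1 - Real.tanh t ^ 2 := by
    have hc := (Real.cosh_pos t).ne'
    rw [Real.tanh_eq_sinh_div_cosh]
    field_simp
  have : HasDerivAt (fun y => Real.sinh y / Real.cosh y) (1 - Real.tanh t ^ 2) t := heq ▸ h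
  exact this.congr_of_eventuallyEq (Filter.Eventually.of_forall fun y =>
    (Real.tanh_eq_sinh_div_cosh y))

theorem stmt_4 (ε W₁ W₂ b₁ b₂ : ℝ) (hε : 0 < ε)
    (c : ℝ → ℝ) (hc : ∀ x, c x = W₂ * Real.tanh (W₁ * x + b₁) + b₂) (x : ℝ)
    (hd : deriv c x ≠ 0)
    (hr : deriv (deriv c) x / deriv c x = 1 / ε) :
    2 * |W₁| > 1 / ε := by
  have hcf : c = fun y => W₂ * Real.tanh (W₁ * y + b₁) + b₂ := funext hc
  -- inner function derivative
  have hinner : ∀ y : ℝ, HasDerivAt (fun z => W₁ * z + b₁) W₁ y := fun y => by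
    simpa using ((hasDerivAt_id y).const_mul W₁).add_const b₁
  have hcd : ∀ y : ℝ, HasDerivAt c (W₂ * ((1 - Real.tanh (W₁ * y + b₁) ^ 2) * W₁)) y := by
    intro y
    rw [hcf]
    exact (((my_hasDerivAt_tanh (W₁ * y + b₁)).comp y (hinner y)).const_mul W₂).add_const b₂
  have hderiv : deriv c = fun y => W₂ * ((1 - Real.tanh (W₁ * y + b₁) ^ 2) * W₁) :=
    funext fun y => (hcd y).deriv
  set T := Real.tanh (W₁ * x + b₁) with hT
  have hdd : HasDerivAt (deriv c)
      (W₂ * ((-(2 * T * ((1 - T ^ 2) * W₁))) * W₁)) x := by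
    rw [hderiv]
    have h1 : HasDerivAt (fun y => Real.tanh (W₁ * y + b₁)) ((1 - T ^ 2) * W₁) x :=
      by have := (my_hasDerivAt_tanh (W₁ * x + b₁)).comp x (hinner x); exact this
    have h2 : HasDerivAt (fun y => Real.tanh (W₁ * y + b₁) ^ 2)
        (2 * T * ((1 - T ^ 2) * W₁)) x := by
      simpa [hT] using (h1.fun_pow 2)
    have h3 : HasDerivAt (fun y => 1 - Real.tanh (W₁ * y + b₁) ^ 2)
        (-(2 * T * ((1 - T ^ 2) * W₁))) x := by
      simpa using (hasDerivAt_const x (1:ℝ)).fun_sub h2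
    exact ((h3.mul_const W₁).const_mul W₂)
  have hd1 : deriv c x = W₂ * ((1 - T ^ 2) * W₁) := (hcd x).deriv
  have hd2 : deriv (deriv c) x = W₂ * ((-(2 * T * ((1 - T ^ 2) * W₁))) * W₁) := hdd.deriv
  have hW₂ : W₂ ≠ 0 := fun h => hd (by rw [hd1, h]; ring)
  have hW₁ : W₁ ≠ 0 := fun h => hd (by rw [hd1, h]; ring)
  have hTsq : 1 - T ^ 2 ≠ 0 := fun h => hd (by rw [hd1, h]; ring)
  have hratio : deriv (deriv c) x / deriv c x = -(2 * T * W₁) := by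
    rw [hd1, hd2]
    field_simp
  have key : -(2 * T * W₁) = 1 / ε := by rw [← hratio, hr]
  have hTlt : |T| < 1 := my_abs_tanh_lt_one _
  have hpos : 0 < 1 / ε := by positivity
  have : 1 / ε = |-(2 * T * W₁)| := by rw [key, abs_of_pos hpos]
  rw [this]
  have : |-(2 * T * W₁)| = 2 * |T| * |W₁| := by
    rw [abs_neg, abs_mul, abs_mul, abs_two]
  rw [this]
  have hW₁pos : 0 < |W₁| := abs_pos.mpr hW₁
  nlinarith [abs_nonneg T]
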